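/- arXiv:1904.12065 — 7 statements merged into one kernel-verified Lean document; each statement's English description precedes it below -/
import Mathlib

section
/- The A-homotopy relation ∼ on stable graph homomorphisms I_∞ → G is an equivalence relation. -/
/-- A graph homomorphism in the A-homotopy sense: adjacent vertices map to
equal or adjacent vertices. -/
def IsGraphHom {V W : Type*} (G : SimpleGraph V) (H : SimpleGraph W) (f : V → W) : Prop :=
  ∀ ⦃u v : V⦄, G.Adj u v → f u = f v ∨ H.Adj (f u) (f v)

/-- The infinite path graph `I_∞` on `ℤ`. -/
def pathGraphZ : SimpleGraph ℤ where
  Adj i j := i ≠ j ∧ (j = i + 1 ∨ i = j + 1)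
  symm := ⟨fun i j h => ⟨h.1.symm, h.2.symm⟩⟩
  loopless := ⟨fun i h => h.1 rfl⟩

/-- The Cartesian (box) product `I_∞ □ I_∞` on `ℤ × ℤ`. -/
def gridGraphZ : SimpleGraph (ℤ × ℤ) where
  Adj p q := p ≠ q ∧ ((p.1 = q.1 ∧ pathGraphZ.Adj p.2 q.2) ∨ (p.2 = q.2 ∧ pathGraphZ.Adj p.1 q.1))
  symm := ⟨fun p q h =>
    ⟨h.1.symm, h.2.imp (fun hc => ⟨hc.1.symm, hc.2.symm⟩) (fun hc => ⟨hc.1.symm, hc.2.symm⟩)⟩⟩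
  loopless := ⟨fun p h => h.1 rfl⟩

/-- The Cartesian product `G □ I_∞` on `V × ℤ`. -/
def boxZ {V : Type*} (G : SimpleGraph V) : SimpleGraph (V × ℤ) where
  Adj p q := p ≠ q ∧ ((p.1 = q.1 ∧ pathGraphZ.Adj p.2 q.2) ∨ (p.2 = q.2 ∧ G.Adj p.1 q.1))
  symm := ⟨fun p q h =>
    ⟨h.1.symm, h.2.imp (fun hc => ⟨hc.1.symm, hc.2.symm⟩) (fun hc => ⟨hc.1.symm, hc.2.symm⟩)⟩⟩
  loopless := ⟨fun p h => h.1 rfl⟩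

/-- The cycle graph `C_n` on `ZMod n`. -/
def cycleGraph (n : ℕ) : SimpleGraph (ZMod n) where
  Adj a b := a ≠ b ∧ (a = b + 1 ∨ b = a + 1)
  symm := ⟨fun a b h => ⟨h.1.symm, h.2.symm⟩⟩
  loopless := ⟨fun a h => h.1 rfl⟩

/-- The one-vertex graph `*`. -/
def oneVertexGraph : SimpleGraph Unit := ⊥

/-- `f` is constant on integers `≤ m`. -/
def IsStabNegAt {V : Type*} (f : ℤ → V) (m : ℤ) : Prop := ∀ i ≤ m, f i = f m

/-- `f` is constant on integers `≥ m`. -/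
def IsStabPosAt {V : Type*} (f : ℤ → V) (m : ℤ) : Prop := ∀ i, m ≤ i → f i = f m

/-- `m` is the greatest integer below which `f` is constant: `m = m₀(f,-1)`. -/
def M0Neg {V : Type*} (f : ℤ → V) (m : ℤ) : Prop :=
  IsStabNegAt f m ∧ ∀ m', IsStabNegAt f m' → m' ≤ m

/-- `m` is the least integer above which `f` is constant: `m = m₀(f,+1)`. -/
def M0Pos {V : Type*} (f : ℤ → V) (m : ℤ) : Prop :=
  IsStabPosAt f m ∧ ∀ m', IsStabPosAt f m' → m ≤ m'

/-- A stable graph homomorphism `I_∞ → G`. -/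
def StableHomZ {V : Type*} (G : SimpleGraph V) (f : ℤ → V) : Prop :=
  IsGraphHom pathGraphZ G f ∧ (∃ m, IsStabNegAt f m) ∧ (∃ m, IsStabPosAt f m)

/-- The A-homotopy relation of Babson et al. on stable maps `I_∞ → G`:
`f` and `g` share their end values `vneg`, `vpos`, and there is a stable graph
homomorphism `H : I_∞² → G` stabilizing in the first axis to the constant end
values and to `f` (resp. `g`) in the negative (resp. positive) second direction. -/
def AHomotopicZ {V : Type*} (G : SimpleGraph V) (f g : ℤ → V) : Prop :=
  ∃ (vneg vpos : V) (H : ℤ × ℤ → V), IsGraphHom gridGraphZ G H ∧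
    (∃ m, ∀ i ≤ m, f i = vneg ∧ g i = vneg) ∧
    (∃ m, ∀ i, m ≤ i → f i = vpos ∧ g i = vpos) ∧
    (∃ m, ∀ a ≤ m, ∀ j : ℤ, H (a, j) = vneg) ∧
    (∃ m, ∀ a, m ≤ a → ∀ j : ℤ, H (a, j) = vpos) ∧
    (∃ m, ∀ j ≤ m, ∀ a : ℤ, H (a, j) = f a) ∧
    (∃ m, ∀ j, m ≤ j → ∀ a : ℤ, H (a, j) = g a)

/-- A-homotopy of graph homomorphisms `G → H` via a finite cylinder `G □ I_n`
(encoded as a homotopy on `G □ I_∞` that is constantly `f` for times `≤ 0` and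
constantly `g` for times `≥ n`). -/
def AHomotopicFin {V W : Type*} (G : SimpleGraph V) (H : SimpleGraph W) (f g : V → W) : Prop :=
  ∃ (n : ℕ) (Φ : V × ℤ → W), IsGraphHom (boxZ G) H Φ ∧
    (∀ v : V, ∀ i ≤ (0 : ℤ), Φ (v, i) = f v) ∧
    (∀ v : V, ∀ i : ℤ, (n : ℤ) ≤ i → Φ (v, i) = g v)

/-- Based A-homotopy: as `AHomotopicFin`, additionally fixing the base vertex
`v0 ↦ w0` at all times. -/
def AHomotopicBased {V W : Type*} (G : SimpleGraph V) (H : SimpleGraph W)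
    (v0 : V) (w0 : W) (f g : V → W) : Prop :=
  ∃ (n : ℕ) (Φ : V × ℤ → W), IsGraphHom (boxZ G) H Φ ∧
    (∀ v : V, ∀ i ≤ (0 : ℤ), Φ (v, i) = f v) ∧
    (∀ v : V, ∀ i : ℤ, (n : ℤ) ≤ i → Φ (v, i) = g v) ∧
    (∀ i : ℤ, Φ (v0, i) = w0)

/-- Concatenation `f · g`, where `mf = m₀(f,-1)` and `mg = m₀(g,+1)`. -/
def concatZ {V : Type*} (f g : ℤ → V) (mf mg : ℤ) : ℤ → V :=
  fun a => if 0 ≤ a then f (a + mf) else g (a + mg)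

/-- The closed neighborhood `N[v]`. -/
def nbhd {V : Type*} (G : SimpleGraph V) (v : V) : Set V := {u | u = v ∨ G.Adj u v}

/-- A covering graph map: a surjective local isomorphism. -/
def IsCoveringMap' {V W : Type*} (Gt : SimpleGraph V) (G : SimpleGraph W) (p : V → W) : Prop :=
  IsGraphHom Gt G p ∧ Function.Surjective p ∧
    ∀ w : V, Set.BijOn p (nbhd Gt w) (nbhd G (p w))

/-- A based loop in `B₁(G, x₀)`: a graph homomorphism `I_∞ → G` equal to `x₀`
outside a finite region. -/
def IsLoopAt {V : Type*} (G : SimpleGraph V) (x0 : V) (γ : ℤ → V) : Prop :=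
  IsGraphHom pathGraphZ G γ ∧ ∃ a b : ℤ, ∀ i : ℤ, (i < a ∨ b < i) → γ i = x0

/-- The 5-cycle. -/
def C5 : SimpleGraph (ZMod 5) := cycleGraph 5

/-- The covering map `p₅ : I_∞ → C₅`, reduction mod 5. -/
def p5 : ℤ → ZMod 5 := fun i => (i : ZMod 5)

/-- The standard loop `γ_n` winding `n` times around `C₅`. -/
def gammaC5 (n : ℤ) : ℤ → ZMod 5 := fun i =>
  if 0 ≤ n then (if i ≤ 0 then 0 else if i ≤ 5 * n then (i : ZMod 5) else 0)
  else (if i ≤ 0 then 0 else if i ≤ -(5 * n) then ((-i : ℤ) : ZMod 5) else 0)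

/-- The standard lift `γ̃_n : I_∞ → I_∞` of `γ_n`, starting at `0` and ending at `5n`. -/
def gammaLift (n : ℤ) : ℤ → ℤ := fun i =>
  if i ≤ 0 then 0 else if i ≤ 5 * |n| then (if 0 ≤ n then i else -i) else 5 * n


private lemma path_shift (c : ℤ) {i j : ℤ} (h : pathGraphZ.Adj i j) :
    pathGraphZ.Adj (i + c) (j + c) := by
  obtain ⟨h1, h2⟩ := h
  exact ⟨by omega, by omega⟩

private lemma path_neg {i j : ℤ} (h : pathGraphZ.Adj i j) :
    pathGraphZ.Adj (-i) (-j) := by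
  obtain ⟨h1, h2⟩ := h
  exact ⟨by omega, by omega⟩

/-- The A-homotopy relation is an equivalence relation on stable graph
homomorphisms `I_∞ → G`. -/
theorem ahomotopic_equivalence {V : Type*} (G : SimpleGraph V) :
    (∀ f : ℤ → V, StableHomZ G f → AHomotopicZ G f f) ∧
    (∀ f g : ℤ → V, StableHomZ G f → StableHomZ G g →
      AHomotopicZ G f g → AHomotopicZ G g f) ∧
    (∀ f g h : ℤ → V, StableHomZ G f → StableHomZ G g → StableHomZ G h →
      AHomotopicZ G f g → AHomotopicZ G g h → AHomotopicZ G f h) := by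
  refine ⟨?_, ?_, ?_⟩
  · -- reflexivity
    rintro f ⟨hf, ⟨mn, hmn⟩, ⟨mp, hmp⟩⟩
    refine ⟨f mn, f mp, fun p => f p.1, ?_,
      ⟨mn, fun i hi => ⟨hmn i hi, hmn i hi⟩⟩,
      ⟨mp, fun i hi => ⟨hmp i hi, hmp i hi⟩⟩,
      ⟨mn, fun a ha j => hmn a ha⟩, ⟨mp, fun a ha j => hmp a ha⟩,
      ⟨0, fun j _ a => rfl⟩, ⟨0, fun j _ a => rfl⟩⟩
    rintro p q ⟨hne, ⟨e1, e2⟩ | ⟨e1, e2⟩⟩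
    · exact Or.inl (congrArg f e1)
    · exact hf e2
  · -- symmetry
    rintro f g _ _ ⟨vn, vp, H, hH, ⟨m1, h1⟩, ⟨m2, h2⟩, ⟨m3, h3⟩, ⟨m4, h4⟩, ⟨m5, h5⟩, ⟨m6, h6⟩⟩
    refine ⟨vn, vp, fun p => H (p.1, -p.2), ?_,
      ⟨m1, fun i hi => ⟨(h1 i hi).2, (h1 i hi).1⟩⟩,
      ⟨m2, fun i hi => ⟨(h2 i hi).2, (h2 i hi).1⟩⟩,
      ⟨m3, fun a ha j => h3 a ha (-j)⟩, ⟨m4, fun a ha j => h4 a ha (-j)⟩,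
      ⟨-m6, fun j hj a => h6 (-j) (by omega) a⟩,
      ⟨-m5, fun j hj a => h5 (-j) (by omega) a⟩⟩
    rintro p q ⟨hne, ⟨e1, e2⟩ | ⟨e1, e2⟩⟩
    · refine hH (u := (p.1, -p.2)) (v := (q.1, -q.2)) ⟨?_, Or.inl ⟨e1, path_neg e2⟩⟩
      intro h
      have h2' := congrArg Prod.snd h
      simp only at h2'
      exact e2.1 (by omega)
    · refine hH (u := (p.1, -p.2)) (v := (q.1, -q.2)) ⟨?_, Or.inr ⟨by rw [e1], e2⟩⟩
      intro h
      have h1' := congrArg Prod.fst h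
      simp only at h1'
      exact e2.1 h1'
  · -- transitivity
    rintro f g h _ _ _
      ⟨v1n, v1p, H1, hH1, ⟨a1, ha1⟩, ⟨a2, ha2⟩, ⟨a3, ha3⟩, ⟨a4, ha4⟩, ⟨a5, ha5⟩, ⟨a6, ha6⟩⟩
      ⟨v2n, v2p, H2, hH2, ⟨b1, hb1⟩, ⟨b2, hb2⟩, ⟨b3, hb3⟩, ⟨b4, hb4⟩, ⟨b5, hb5⟩, ⟨b6, hb6⟩⟩
    have hvn : v2n = v1n := by
      have e1 := (ha1 (min a1 b1) (min_le_left _ _)).2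
      have e2 := (hb1 (min a1 b1) (min_le_right _ _)).1
      rw [e1] at e2; exact e2.symm
    have hvp : v2p = v1p := by
      have e1 := (ha2 (max a2 b2) (le_max_left _ _)).2
      have e2 := (hb2 (max a2 b2) (le_max_right _ _)).1
      rw [e1] at e2; exact e2.symm
    set Φ : ℤ × ℤ → V := fun p => if p.2 ≤ 0 then H1 (p.1, p.2 + a6) else H2 (p.1, p.2 + b5 - 1)
      with hΦ
    have hΦle : ∀ a : ℤ, ∀ j : ℤ, j ≤ 0 → Φ (a, j) = H1 (a, j + a6) := by
      intro a j hj; simp [hΦ, hj]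
    have hΦgt : ∀ a : ℤ, ∀ j : ℤ, 0 < j → Φ (a, j) = H2 (a, j + b5 - 1) := by
      intro a j hj; simp [hΦ, not_le.2 hj]
    refine ⟨v1n, v1p, Φ, ?_,
      ⟨min a1 b1, fun i hi => ⟨(ha1 i (le_trans hi (min_le_left _ _))).1,
        hvn ▸ (hb1 i (le_trans hi (min_le_right _ _))).2⟩⟩,
      ⟨max a2 b2, fun i hi => ⟨(ha2 i (le_trans (le_max_left _ _) hi)).1,
        hvp ▸ (hb2 i (le_trans (le_max_right _ _) hi)).2⟩⟩,
      ⟨min a3 b3, ?_⟩, ⟨max a4 b4, ?_⟩,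
      ⟨min 0 (a5 - a6), ?_⟩, ⟨max 1 (b6 - b5 + 1), ?_⟩⟩
    · -- graph hom
      rintro p q ⟨hne, ⟨e1, e2⟩ | ⟨e1, e2⟩⟩
      · -- same first coordinate, adjacent seconds
        by_cases hp : p.2 ≤ 0 <;> by_cases hq : q.2 ≤ 0
        · rw [hΦle p.1 p.2 hp, hΦle q.1 q.2 hq]
          refine hH1 (u := (p.1, p.2 + a6)) (v := (q.1, q.2 + a6))
            ⟨?_, Or.inl ⟨e1, path_shift a6 e2⟩⟩
          intro hcon
          have := congrArg Prod.snd hcon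
          simp only at this
          exact e2.1 (by omega)
        · -- p.2 = 0, q.2 = 1
          have hp0 : p.2 = 0 := by obtain ⟨_, h'⟩ := e2; omega
          have hq1 : q.2 = 1 := by obtain ⟨_, h'⟩ := e2; omega
          left
          rw [hΦle p.1 p.2 hp, hΦgt q.1 q.2 (by omega), hp0, hq1]
          rw [ha6 (0 + a6) (by omega) p.1, hb5 (1 + b5 - 1) (by omega) q.1, e1]
        · -- q.2 = 0, p.2 = 1
          have hq0 : q.2 = 0 := by obtain ⟨_, h'⟩ := e2; omega
          have hp1 : p.2 = 1 := by obtain ⟨_, h'⟩ := e2; omega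
          left
          rw [hΦgt p.1 p.2 (by omega), hΦle q.1 q.2 hq, hp1, hq0]
          rw [hb5 (1 + b5 - 1) (by omega) p.1, ha6 (0 + a6) (by omega) q.1, e1]
        · rw [hΦgt p.1 p.2 (by omega), hΦgt q.1 q.2 (by omega)]
          refine hH2 (u := (p.1, p.2 + b5 - 1)) (v := (q.1, q.2 + b5 - 1))
            ⟨?_, Or.inl ⟨e1, by have := path_shift (b5 - 1) e2; simpa [add_sub_assoc] using this⟩⟩
          intro hcon
          have := congrArg Prod.snd hcon
          simp only at this
          exact e2.1 (by omega)
      · -- same second coordinate, adjacent firsts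
        by_cases hp : p.2 ≤ 0
        · rw [hΦle p.1 p.2 hp, hΦle q.1 q.2 (e1 ▸ hp)]
          refine hH1 (u := (p.1, p.2 + a6)) (v := (q.1, q.2 + a6))
            ⟨?_, Or.inr ⟨by rw [e1], e2⟩⟩
          intro hcon
          have := congrArg Prod.fst hcon
          simp only at this
          exact e2.1 this
        · rw [hΦgt p.1 p.2 (by omega), hΦgt q.1 q.2 (by rw [← e1]; omega)]
          refine hH2 (u := (p.1, p.2 + b5 - 1)) (v := (q.1, q.2 + b5 - 1))
            ⟨?_, Or.inr ⟨by rw [e1], e2⟩⟩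
          intro hcon
          have := congrArg Prod.fst hcon
          simp only at this
          exact e2.1 this
    · -- first axis, negative
      intro a ha j
      by_cases hj : j ≤ 0
      · rw [hΦle a j hj]; exact ha3 a (le_trans ha (min_le_left _ _)) _
      · rw [hΦgt a j (by omega), hb3 a (le_trans ha (min_le_right _ _)) _]; exact hvn
    · -- first axis, positive
      intro a ha j
      by_cases hj : j ≤ 0
      · rw [hΦle a j hj]; exact ha4 a (le_trans (le_max_left _ _) ha) _
      · rw [hΦgt a j (by omega), hb4 a (le_trans (le_max_right _ _) ha) _]; exact hvp
    · -- second axis negative: f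
      intro j hj a
      have hj0 : j ≤ 0 := le_trans hj (min_le_left _ _)
      rw [hΦle a j hj0]
      exact ha5 (j + a6) (by have := le_trans hj (min_le_right _ _); omega) a
    · -- second axis positive: h
      intro j hj a
      have hj1 : 0 < j := lt_of_lt_of_le (by omega) (le_trans (le_max_left _ _) hj)
      rw [hΦgt a j hj1]
      exact hb6 (j + b5 - 1) (by have := le_trans (le_max_right _ _) hj; omega) a
end

section
/- Path Lifting Property: Let p: G̃ → G be a covering graph (a surjective graph homomorphism that restricts to a bijection N[w] → N[p(w)] on closed neighborhoods for every vertex w of G̃). For every stable graph homomorphism f: I_∞ → G starting at vertex v₀ = f(m₀(f,-1)), and every ṽ₀ ∈ p⁻¹(v₀), there exists a unique graph homomorphism f̃: I_∞ → G̃ with p ∘ f̃ = f and f̃(i) = ṽ₀ for all i ≤ m₀(f,-1). -/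
/-- Path Lifting Property: through a covering graph, every stable path starting
at `v₀` lifts uniquely once a starting vertex `ṽ₀ ∈ p⁻¹(v₀)` is chosen. -/

theorem path_lifting {V W : Type*} (Gt : SimpleGraph V) (G : SimpleGraph W) (p : V → W)
    (hp : IsCoveringMap' Gt G p) (f : ℤ → W) (mf : ℤ)
    (hf : IsGraphHom pathGraphZ G f) (hfn : IsStabNegAt f mf)
    (hfp : ∃ m, IsStabPosAt f m)
    (v0t : V) (hv : p v0t = f mf) :
    ∃! ft : ℤ → V, IsGraphHom pathGraphZ Gt ft ∧ (∀ i : ℤ, p (ft i) = f i) ∧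
      (∀ i ≤ mf, ft i = v0t) := by
  classical
  obtain ⟨hphom, hpsurj, hpbij⟩ := hp
  -- unique step lifting
  have step : ∀ (w : V) (x : W), x ∈ nbhd G (p w) → ∃! u, u ∈ nbhd Gt w ∧ p u = x := by
    intro w x hx
    obtain ⟨u, hu, hpu⟩ := (hpbij w).surjOn hx
    exact ⟨u, ⟨hu, hpu⟩, fun v hv2 => (hpbij w).injOn hv2.1 hu (hv2.2.trans hpu.symm)⟩
  -- adjacency of consecutive integers
  have adjZ : ∀ i : ℤ, pathGraphZ.Adj i (i + 1) := by
    intro i; exact ⟨by omega, Or.inl rfl⟩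
  -- membership of next value in neighborhood
  have fnbhd : ∀ (i : ℤ) (w : V), p w = f i → f (i + 1) ∈ nbhd G (p w) := by
    intro i w hw
    rcases hf (adjZ i) with h | h
    · exact Or.inl (by rw [hw, h])
    · exact Or.inr (by rw [hw]; exact (h.symm))
  -- define next
  set next : V → W → V := fun w x => if h : x ∈ nbhd G (p w) then (step w x h).choose else w
    with hnext
  have next_spec : ∀ (w : V) (x : W) (h : x ∈ nbhd G (p w)),
      next w x ∈ nbhd Gt w ∧ p (next w x) = x := by
    intro w x h
    have := (step w x h).choose_spec.1
    simp only [hnext, dif_pos h]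
    exact this
  -- the sequence from mf upward
  set g : ℕ → V := fun n => Nat.rec v0t (fun n u => next u (f (mf + n + 1))) n with hg
  have g0 : g 0 = v0t := rfl
  have gsucc : ∀ n : ℕ, g (n + 1) = next (g n) (f (mf + n + 1)) := fun n => rfl
  have gp : ∀ n : ℕ, p (g n) = f (mf + n) := by
    intro n
    induction n with
    | zero => simpa [g0] using hv
    | succ n ih =>
      have hmem := fnbhd (mf + n) (g n) ih
      have := (next_spec (g n) (f (mf + n + 1)) (by rwa [show (mf + (n:ℤ)) + 1 = mf + n + 1 by push_cast; ring] at hmem)).2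
      rw [gsucc]
      rw [this]; congr 1; push_cast; ring
  have gnb : ∀ n : ℕ, g (n + 1) ∈ nbhd Gt (g n) := by
    intro n
    have hmem := fnbhd (mf + n) (g n) (gp n)
    rw [show (mf + (n:ℤ)) + 1 = mf + n + 1 by push_cast; ring] at hmem
    rw [gsucc]
    exact (next_spec (g n) (f (mf + n + 1)) hmem).1
  -- the lift
  set ft : ℤ → V := fun i => if i ≤ mf then v0t else g (i - mf).toNat with hft
  have ftle : ∀ i ≤ mf, ft i = v0t := by intro i hi; simp [hft, hi]
  have fteq : ∀ n : ℕ, ft (mf + n) = g n := by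
    intro n
    cases n with
    | zero => simpa using g0.symm ▸ (ftle mf le_rfl)
    | succ n =>
      have h1 : ¬ mf + ((n:ℤ) + 1) ≤ mf := by omega
      have h2 : (mf + ((n:ℤ)+1) - mf).toNat = n + 1 := by omega
      simp only [hft]
      push_cast
      rw [if_neg h1, h2]
  have ftp : ∀ i : ℤ, p (ft i) = f i := by
    intro i
    by_cases hi : i ≤ mf
    · rw [ftle i hi, hv, hfn i hi]
    · have : i = mf + (i - mf).toNat := by omega
      rw [hft]; simp only [if_neg hi]
      rw [gp]; congr 1; omega
  -- each consecutive step: equal or adjacent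
  have ftstep : ∀ i : ℤ, ft i = ft (i + 1) ∨ Gt.Adj (ft i) (ft (i + 1)) := by
    intro i
    by_cases hi : i + 1 ≤ mf
    · left; rw [ftle i (by omega), ftle (i+1) hi]
    · -- i + 1 > mf, so i ≥ mf
      have hi' : mf ≤ i := by omega
      obtain ⟨n, hn⟩ : ∃ n : ℕ, i = mf + n := ⟨(i - mf).toNat, by omega⟩
      have e1 : ft i = g n := by rw [hn, fteq]
      have e2 : ft (i + 1) = g (n + 1) := by
        have : i + 1 = mf + ((n : ℕ) + 1 : ℕ) := by rw [hn]; push_cast; ring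
        rw [this, fteq]
      rw [e1, e2]
      rcases gnb n with h | h
      · exact Or.inl h.symm
      · exact Or.inr h.symm
  have fthom : IsGraphHom pathGraphZ Gt ft := by
    intro a b hab
    rcases hab.2 with h | h
    · subst h; exact ftstep a
    · subst h
      rcases ftstep b with h' | h'
      · exact Or.inl h'.symm
      · exact Or.inr h'.symm
  refine ⟨ft, ⟨fthom, ftp, ftle⟩, ?_⟩
  -- uniqueness
  rintro ft' ⟨h'hom, h'p, h'le⟩
  funext i
  by_cases hi : i ≤ mf
  · rw [h'le i hi, ftle i hi]
  · have key : ∀ n : ℕ, ft' (mf + n) = g n := by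
      intro n
      induction n with
      | zero => simpa [g0] using h'le mf le_rfl
      | succ n ih =>
        have hadj := h'hom (adjZ (mf + n))
        have hmem : ft' (mf + (n:ℤ) + 1) ∈ nbhd Gt (g n) := by
          rw [← ih]
          rcases hadj with h | h
          · exact Or.inl h.symm
          · exact Or.inr h.symm
        have hp' : p (ft' (mf + (n:ℤ) + 1)) = f (mf + n + 1) := h'p _
        have hmemf := fnbhd (mf + n) (g n) (gp n)
        rw [show (mf + (n:ℤ)) + 1 = mf + n + 1 by push_cast; ring] at hmemf
        have huniq := (step (g n) (f (mf + n + 1)) hmemf).unique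
          (y₁ := ft' (mf + (n:ℤ) + 1)) (y₂ := g (n + 1))
          ⟨hmem, hp'⟩ ⟨gnb n, by rw [gp (n+1)]; congr 1; push_cast; ring⟩
        rw [show mf + ((n:ℕ)+1:ℕ) = mf + (n:ℤ) + 1 by push_cast; ring]
        exact huniq
      -- done
    have : i = mf + ((i - mf).toNat : ℤ) := by omega
    rw [this, key, fteq]
end

section
/- Uniqueness of path lifts: if p: G̃ → G is a covering graph and f̃, g̃: I_∞ → G̃ are graph homomorphisms with p∘f̃ = p∘g̃ = f for a stable f starting at v₀, and both f̃ and g̃ equal the same vertex ṽ₀ ∈ p⁻¹(v₀) at m₀(f,-1) and are constant before it, then f̃ = g̃. -/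
/-- Uniqueness of path lifts through a covering graph. -/
theorem path_lift_unique {V W : Type*} (Gt : SimpleGraph V) (G : SimpleGraph W) (p : V → W)
    (hp : IsCoveringMap' Gt G p) (f : ℤ → W) (mf : ℤ)
    (hf : IsGraphHom pathGraphZ G f) (hfn : IsStabNegAt f mf)
    (hfp : ∃ m, IsStabPosAt f m)
    (v0t : V) (hv : p v0t = f mf)
    (ft gt : ℤ → V)
    (hft : IsGraphHom pathGraphZ Gt ft) (hgt : IsGraphHom pathGraphZ Gt gt)
    (hpf : ∀ i : ℤ, p (ft i) = f i) (hpg : ∀ i : ℤ, p (gt i) = f i)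
    (hf0 : ∀ i ≤ mf, ft i = v0t) (hg0 : ∀ i ≤ mf, gt i = v0t) :
    ft = gt := by
  have key : ∀ n : ℕ, ft (mf + n) = gt (mf + n) := by
    intro n
    induction n with
    | zero =>
      simp only [Nat.cast_zero, add_zero]
      rw [hf0 mf le_rfl, hg0 mf le_rfl]
    | succ k ih =>
      have hadj : pathGraphZ.Adj (mf + k) (mf + k + 1) := ⟨by omega, Or.inl rfl⟩
      have hmem1 : ft (mf + k + 1) ∈ nbhd Gt (ft (mf + k)) := by
        rcases hft hadj with h | h
        · exact Or.inl h.symm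
        · exact Or.inr h.symm
      have hmem2 : gt (mf + k + 1) ∈ nbhd Gt (ft (mf + k)) := by
        rw [ih]
        rcases hgt hadj with h | h
        · exact Or.inl h.symm
        · exact Or.inr h.symm
      have heq : p (ft (mf + k + 1)) = p (gt (mf + k + 1)) := by
        rw [hpf, hpg]
      have := (hp.2.2 (ft (mf + k))).injOn hmem1 hmem2 heq
      have hcast : mf + ((k : ℤ) + 1) = mf + k + 1 := by ring
      simpa [hcast] using this
  funext i
  by_cases h : i ≤ mf
  · rw [hf0 i h, hg0 i h]
  · have h2 := key (i - mf).toNat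
    rw [Int.toNat_of_nonneg (by omega : (0 : ℤ) ≤ i - mf)] at h2
    simpa using h2
end

section
/- General Padding Lemma: Let f: I_∞ → G be a stable graph homomorphism, and let b be an integer with m₀(f,-1) < b < m₀(f,+1), and n, m ∈ ℕ. Define f' by f'(i) = f(i−m) for i ≥ b+m, f'(i) = f(b) for b−n ≤ i ≤ b+m, and f'(i) = f(i+n) for i ≤ b−n. Then f' is a stable graph homomorphism and f ∼ f' (they are A-homotopic). -/
/-- The padded path: `f'` inserts `n + m` repetitions of `f b` around `b`. -/
def paddedPath {V : Type*} (f : ℤ → V) (b : ℤ) (n m : ℕ) : ℤ → V :=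
  fun i => if b + (m : ℤ) ≤ i then f (i - m) else if b - (n : ℤ) ≤ i then f b else f (i + n)

section PaddingAux

variable {V : Type*} {G : SimpleGraph V} {f : ℤ → V}

/-- `padP f b p q` pads `f` by `p` units on the left of `b` and `q` on the right. -/
private def padP (f : ℤ → V) (b p q : ℤ) : ℤ → V :=
  fun i => if b + q ≤ i then f (i - q) else if b - p ≤ i then f b else f (i + p)

private lemma step_aux (hf : IsGraphHom pathGraphZ G f) (i : ℤ) :
    f i = f (i + 1) ∨ G.Adj (f i) (f (i + 1)) :=
  hf ⟨by omega, Or.inl rfl⟩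

private lemma padP_step (hf : IsGraphHom pathGraphZ G f) (b p q : ℤ)
    (hp : 0 ≤ p) (hq : 0 ≤ q) (i : ℤ) :
    padP f b p q i = padP f b p q (i + 1) ∨
      G.Adj (padP f b p q i) (padP f b p q (i + 1)) := by
  have hgen : ∀ x y : ℤ, y = x + 1 → (f x = f y ∨ G.Adj (f x) (f y)) := by
    intro x y h; subst h; exact step_aux hf x
  unfold padP
  by_cases h1 : b + q ≤ i
  · rw [if_pos h1, if_pos (show b + q ≤ i + 1 by omega)]
    exact hgen _ _ (by ring)
  · rw [if_neg h1]
    by_cases h2 : b - p ≤ i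
    · rw [if_pos h2]
      by_cases h3 : b + q ≤ i + 1
      · rw [if_pos h3]; left; congr 1; omega
      · rw [if_neg h3, if_pos (show b - p ≤ i + 1 by omega)]; left; rfl
    · rw [if_neg h2]
      by_cases h3 : b + q ≤ i + 1
      · rw [if_pos h3]; exact hgen _ _ (by omega)
      · rw [if_neg h3]
        by_cases h4 : b - p ≤ i + 1
        · rw [if_pos h4]; exact hgen _ _ (by omega)
        · rw [if_neg h4]; exact hgen _ _ (by ring)

private lemma padP_hom (hf : IsGraphHom pathGraphZ G f) (b p q : ℤ)
    (hp : 0 ≤ p) (hq : 0 ≤ q) : IsGraphHom pathGraphZ G (padP f b p q) := by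
  intro u v hadj
  rcases hadj.2 with h | h
  · subst h; exact padP_step hf b p q hp hq u
  · subst h
    exact (padP_step hf b p q hp hq v).imp Eq.symm fun h => h.symm

private lemma padL_step (hf : IsGraphHom pathGraphZ G f) (b p q : ℤ)
    (hp : 0 ≤ p) (hq : 0 ≤ q) (i : ℤ) :
    padP f b p q i = padP f b (p + 1) q i ∨
      G.Adj (padP f b p q i) (padP f b (p + 1) q i) := by
  have hgen : ∀ x y : ℤ, y = x + 1 → (f x = f y ∨ G.Adj (f x) (f y)) := by
    intro x y h; subst h; exact step_aux hf x
  unfold padP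
  by_cases h1 : b + q ≤ i
  · rw [if_pos h1, if_pos h1]; left; rfl
  · rw [if_neg h1, if_neg h1]
    by_cases h2 : b - p ≤ i
    · rw [if_pos h2, if_pos (show b - (p + 1) ≤ i by omega)]; left; rfl
    · rw [if_neg h2]
      by_cases h3 : b - (p + 1) ≤ i
      · rw [if_pos h3]; exact hgen _ _ (by omega)
      · rw [if_neg h3]; exact hgen _ _ (by ring)

private lemma padR_step (hf : IsGraphHom pathGraphZ G f) (b p q : ℤ)
    (hp : 0 ≤ p) (hq : 0 ≤ q) (i : ℤ) :
    padP f b p q i = padP f b p (q + 1) i ∨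
      G.Adj (padP f b p q i) (padP f b p (q + 1) i) := by
  have hgen : ∀ x y : ℤ, y = x + 1 → (f x = f y ∨ G.Adj (f x) (f y)) := by
    intro x y h; subst h; exact step_aux hf x
  unfold padP
  by_cases h1 : b + (q + 1) ≤ i
  · rw [if_pos h1, if_pos (show b + q ≤ i by omega)]
    exact (hgen (i - (q + 1)) (i - q) (by ring)).imp Eq.symm fun h => h.symm
  · rw [if_neg h1]
    by_cases h2 : b + q ≤ i
    · rw [if_pos h2, if_pos (show b - p ≤ i by omega)]; left; congr 1; omega
    · rw [if_neg h2]
      by_cases h3 : b - p ≤ i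
      · rw [if_pos h3]; left; rfl
      · rw [if_neg h3]; left; rfl

private lemma padP_zero (b i : ℤ) : padP f b 0 0 i = f i := by
  unfold padP
  split_ifs with h1 h2
  · rw [sub_zero]
  · exact absurd h2 (by omega)
  · rw [add_zero]

/-- Left padding amount at time `j`. -/
private def Lpad (n : ℕ) (j : ℤ) : ℤ := min (max j 0) n

/-- Right padding amount at time `j`. -/
private def Rpad (n m : ℕ) (j : ℤ) : ℤ := min (max (j - n) 0) m

/-- The homotopy. -/
private def Hpad (f : ℤ → V) (b : ℤ) (n m : ℕ) : ℤ × ℤ → V :=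
  fun p => padP f b (Lpad n p.2) (Rpad n m p.2) p.1

private lemma Lpad_nonneg (n : ℕ) (j : ℤ) : 0 ≤ Lpad n j := by unfold Lpad; omega
private lemma Lpad_le (n : ℕ) (j : ℤ) : Lpad n j ≤ n := by unfold Lpad; omega
private lemma Rpad_nonneg (n m : ℕ) (j : ℤ) : 0 ≤ Rpad n m j := by unfold Rpad; omega
private lemma Rpad_le (n m : ℕ) (j : ℤ) : Rpad n m j ≤ m := by unfold Rpad; omega

private lemma Hpad_vert (hf : IsGraphHom pathGraphZ G f) (b : ℤ) (n m : ℕ) (a j : ℤ) :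
    Hpad f b n m (a, j) = Hpad f b n m (a, j + 1) ∨
      G.Adj (Hpad f b n m (a, j)) (Hpad f b n m (a, j + 1)) := by
  have hcase : (Lpad n (j + 1) = Lpad n j ∧ Rpad n m (j + 1) = Rpad n m j) ∨
      (Lpad n (j + 1) = Lpad n j + 1 ∧ Rpad n m (j + 1) = Rpad n m j) ∨
      (Lpad n (j + 1) = Lpad n j ∧ Rpad n m (j + 1) = Rpad n m j + 1) := by
    unfold Lpad Rpad; omega
  unfold Hpad
  rcases hcase with ⟨h1, h2⟩ | ⟨h1, h2⟩ | ⟨h1, h2⟩ <;> rw [h1, h2]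
  · left; rfl
  · exact padL_step hf b _ _ (Lpad_nonneg n j) (Rpad_nonneg n m j) a
  · exact padR_step hf b _ _ (Lpad_nonneg n j) (Rpad_nonneg n m j) a

private lemma Hpad_hom (hf : IsGraphHom pathGraphZ G f) (b : ℤ) (n m : ℕ) :
    IsGraphHom gridGraphZ G (Hpad f b n m) := by
  intro u v hadj
  obtain ⟨a, j⟩ := u
  obtain ⟨a', j'⟩ := v
  rcases hadj.2 with ⟨h1, h2⟩ | ⟨h1, h2⟩
  · simp only at h1 h2
    subst h1
    rcases h2.2 with h | h
    · subst h; exact Hpad_vert hf b n m a j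
    · subst h
      exact (Hpad_vert hf b n m a j').imp Eq.symm fun h => h.symm
  · simp only at h1 h2
    subst h1
    exact padP_hom hf b _ _ (Lpad_nonneg n j) (Rpad_nonneg n m j) h2

end PaddingAux

/-- General Padding Lemma: a stable path is A-homotopic to the same path with
padding inserted at an interior point `b`, `m₀(f,-1) < b < m₀(f,+1)`. -/
theorem general_padding {V : Type*} (G : SimpleGraph V) (f : ℤ → V)
    (mneg mpos b : ℤ) (n m : ℕ)
    (hf : IsGraphHom pathGraphZ G f) (hmn : M0Neg f mneg) (hmp : M0Pos f mpos)
    (hb1 : mneg < b) (hb2 : b < mpos) :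
    StableHomZ G (paddedPath f b n m) ∧ AHomotopicZ G f (paddedPath f b n m) := by
  have hpad_eq : paddedPath f b n m = padP f b n m := rfl
  -- the padded path below the padding region
  have hlo : ∀ i ≤ mneg - n, paddedPath f b n m i = f mneg := by
    intro i hi
    unfold paddedPath
    rw [if_neg (by omega), if_neg (by omega)]
    exact hmn.1 (i + n) (by omega)
  -- the padded path above the padding region
  have hhi : ∀ i, mpos + m ≤ i → paddedPath f b n m i = f mpos := by
    intro i hi
    unfold paddedPath
    rw [if_pos (by omega)]
    exact hmp.1 (i - m) (by omega)
  constructor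
  · refine ⟨?_, ⟨mneg - n, ?_⟩, ⟨mpos + m, ?_⟩⟩
    · rw [hpad_eq]
      exact padP_hom hf b n m (by positivity) (by positivity)
    · intro i hi; rw [hlo i hi, hlo (mneg - n) le_rfl]
    · intro i hi; rw [hhi i hi, hhi (mpos + m) le_rfl]
  · refine ⟨f mneg, f mpos, Hpad f b n m, Hpad_hom hf b n m, ⟨mneg - n, ?_⟩,
      ⟨mpos + m, ?_⟩, ⟨mneg - n, ?_⟩, ⟨mpos + m, ?_⟩, ⟨0, ?_⟩, ⟨(n : ℤ) + m, ?_⟩⟩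
    · intro i hi
      exact ⟨hmn.1 i (by omega), hlo i hi⟩
    · intro i hi
      exact ⟨hmp.1 i (by omega), hhi i hi⟩
    · intro a ha j
      have h1 := Lpad_nonneg n j
      have h2 := Lpad_le n j
      have h3 := Rpad_nonneg n m j
      show padP f b (Lpad n j) (Rpad n m j) a = f mneg
      unfold padP
      rw [if_neg (by omega), if_neg (by omega)]
      exact hmn.1 (a + Lpad n j) (by omega)
    · intro a ha j
      have h3 := Rpad_nonneg n m j
      have h4 := Rpad_le n m j
      show padP f b (Lpad n j) (Rpad n m j) a = f mpos
      unfold padP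
      rw [if_pos (by omega)]
      exact hmp.1 (a - Rpad n m j) (by omega)
    · intro j hj a
      have hL : Lpad n j = 0 := by unfold Lpad; omega
      have hR : Rpad n m j = 0 := by unfold Rpad; omega
      show padP f b (Lpad n j) (Rpad n m j) a = f a
      rw [hL, hR, padP_zero]
    · intro j hj a
      have hL : Lpad n j = n := by unfold Lpad; omega
      have hR : Rpad n m j = m := by unfold Rpad; omega
      show padP f b (Lpad n j) (Rpad n m j) a = paddedPath f b n m a
      rw [hL, hR, hpad_eq]
end

section
/- Shifting Lemma: For any stable graph homomorphism f: I_∞ → G and any integer n, the shifted map f_n defined by f_n(i) = f(i − n) is A-homotopic to f. -/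
/-- Shifting Lemma: a stable graph homomorphism is A-homotopic to any of its
integer shifts. -/
theorem shifting_lemma {V : Type*} (G : SimpleGraph V) (f : ℤ → V)
    (hf : StableHomZ G f) (n : ℤ) :
    AHomotopicZ G f (fun i => f (i - n)) := by
  obtain ⟨hhom, ⟨mneg, hneg⟩, ⟨mpos, hpos⟩⟩ := hf
  set c : ℤ → ℤ := fun j => if 0 ≤ n then max 0 (min j n) else min 0 (max (-j) n) with hc
  have hc0 : ∀ j ≤ (0 : ℤ), c j = 0 := by
    intro j hj; simp only [hc]; split <;> omega
  have hcn : ∀ j : ℤ, n ≤ j → -n ≤ j → c j = n := by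
    intro j h1 h2; simp only [hc]; split <;> omega
  have hlb : ∀ j : ℤ, min 0 n ≤ c j := by
    intro j; simp only [hc]; split <;> omega
  have hub : ∀ j : ℤ, c j ≤ max 0 n := by
    intro j; simp only [hc]; split <;> omega
  have hstep : ∀ j : ℤ, c j ≤ c (j + 1) + 1 ∧ c (j + 1) ≤ c j + 1 := by
    intro j; simp only [hc]; split <;> omega
  have key : ∀ x y : ℤ, (y = x + 1 ∨ x = y + 1 ∨ x = y) → f x = f y ∨ G.Adj (f x) (f y) := by
    intro x y h
    rcases eq_or_ne x y with h' | h'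
    · exact Or.inl (by rw [h'])
    · exact hhom (show pathGraphZ.Adj x y from ⟨h', by omega⟩)
  refine ⟨f mneg, f mpos, fun p => f (p.1 - c p.2), ?_, ⟨min mneg (mneg + n), ?_⟩,
    ⟨max mpos (mpos + n), ?_⟩, ⟨mneg + min 0 n, ?_⟩, ⟨mpos + max 0 n, ?_⟩,
    ⟨0, ?_⟩, ⟨max n (-n), ?_⟩⟩
  · -- graph homomorphism
    rintro ⟨a, j⟩ ⟨b, k⟩ ⟨hne, h | h⟩ <;> dsimp only at h ⊢
    · obtain ⟨hab, hjk, hj2⟩ := h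
      refine key _ _ ?_
      rcases hj2 with h' | h' <;> subst h' <;>
        [have h1 := hstep j; have h2 := hstep k] <;> simp only [hab] <;> omega
    · obtain ⟨hjk, hab, hj2⟩ := h
      refine key _ _ ?_
      subst hjk
      omega
  · intro i hi
    constructor
    · exact hneg i (by omega)
    · exact hneg (i - n) (by omega)
  · intro i hi
    constructor
    · exact hpos i (by omega)
    · exact hpos (i - n) (by omega)
  · intro a ha j
    exact hneg (a - c j) (by have := hlb j; omega)
  · intro a ha j
    exact hpos (a - c j) (by have := hub j; omega)
  · intro j hj a
    simp only [hc0 j hj, sub_zero]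
  · intro j hj a
    simp only [hcn j (by omega) (by omega)]
end

section
/- Any stable graph homomorphism f̃: I_∞ → I_∞ starting at 0 and ending at 5n is A-homotopic to the standard lift γ̃ₙ, where γ̃ₙ(i) = 0 for i ≤ 0, γ̃ₙ(i) = i (resp. −i) for 0 ≤ i ≤ 5n (resp. 0 ≤ i ≤ −5n) when n ≥ 0 (resp. n ≤ 0), and γ̃ₙ(i) = 5n thereafter. -/
lemma lipOfStep (f : ℤ → ℤ) (hf : ∀ a : ℤ, f (a+1) - f a ≤ 1 ∧ f a - f (a+1) ≤ 1)
    (a : ℤ) : ∀ b : ℤ, a ≤ b → f b - f a ≤ b - a ∧ f a - f b ≤ b - a := by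
  refine Int.le_induction (motive := fun b _ => f b - f a ≤ b - a ∧ f a - f b ≤ b - a) ?_ ?_
  · omega
  · intro b hb ih
    have := hf b
    omega

lemma gl_step (n : ℤ) (i : ℤ) :
    gammaLift n (i+1) - gammaLift n i ≤ 1 ∧ gammaLift n i - gammaLift n (i+1) ≤ 1 := by
  unfold gammaLift
  rcases le_or_gt 0 n with hn | hn
  · rw [abs_of_nonneg hn]; split_ifs <;> omega
  · rw [abs_of_neg hn]; split_ifs <;> omega

lemma gl_neg (n : ℤ) {i : ℤ} (h : i ≤ 0) : gammaLift n i = 0 := by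
  unfold gammaLift; simp [h]

lemma gl_pos (n : ℤ) {i : ℤ} (h : 5 * |n| + 1 ≤ i) : gammaLift n i = 5 * n := by
  unfold gammaLift
  rcases le_or_gt 0 n with hn | hn
  · rw [abs_of_nonneg hn] at h ⊢; split_ifs <;> omega
  · rw [abs_of_neg hn] at h ⊢; split_ifs <;> omega

lemma key_lip (g1 g2 A1 A2 B1 B2 : ℤ)
    (h3 : g1 - g2 ≤ 1) (h4 : g2 - g1 ≤ 1) (h5 : A1 - A2 ≤ 1) (h6 : A2 - A1 ≤ 1)
    (h7 : B1 - B2 ≤ 1) (h8 : B2 - B1 ≤ 1) :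
    max (min g1 A1) B1 - max (min g2 A2) B2 ≤ 1 ∧
    max (min g2 A2) B2 - max (min g1 A1) B1 ≤ 1 := by omega

/-- Any stable graph homomorphism `I_∞ → I_∞` starting at `0` and ending at
`5n` is A-homotopic to the standard lift `γ̃ₙ`. -/
theorem lift_homotopic_standard (n : ℤ) (ft : ℤ → ℤ) (mneg mpos : ℤ)
    (hft : IsGraphHom pathGraphZ pathGraphZ ft)
    (hn : IsStabNegAt ft mneg) (hp : IsStabPosAt ft mpos)
    (hstart : ft mneg = 0) (hend : ft mpos = 5 * n) :
    AHomotopicZ pathGraphZ ft (gammaLift n) := by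
  classical
  set g := gammaLift n with hgdef
  -- step bounds
  have fstep : ∀ a : ℤ, ft (a+1) - ft a ≤ 1 ∧ ft a - ft (a+1) ≤ 1 := by
    intro a
    have hadj : pathGraphZ.Adj a (a+1) := ⟨by omega, Or.inl rfl⟩
    rcases hft hadj with h | h
    · omega
    · rcases h with ⟨_, h | h⟩ <;> omega
  have gstep : ∀ a : ℤ, g (a+1) - g a ≤ 1 ∧ g a - g (a+1) ≤ 1 := fun a => gl_step n a
  have flip := lipOfStep ft fstep
  have glip := lipOfStep g gstep
  -- constants
  set m : ℤ := min mneg 0 with hmdef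
  set M : ℤ := max mpos (5 * |n| + 1) with hMdef
  have habs : 0 ≤ |n| := abs_nonneg n
  -- end values
  have hfneg : ∀ a : ℤ, a ≤ mneg → ft a = 0 := fun a ha => (hn a ha).trans hstart
  have hfpos : ∀ a : ℤ, mpos ≤ a → ft a = 5 * n := fun a ha => (hp a ha).trans hend
  have hgneg : ∀ a : ℤ, a ≤ 0 → g a = 0 := fun a ha => gl_neg n ha
  have hgpos : ∀ a : ℤ, 5 * |n| + 1 ≤ a → g a = 5 * n := fun a ha => gl_pos n ha
  -- uniform bound on |g - ft|
  set B : ℤ := max 0 (M - mneg) + max 0 M with hBdef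
  have hB0 : 0 ≤ B := by positivity
  have hfbound : ∀ a : ℤ, m < a → a < M → ft a ≤ max 0 (M - mneg) ∧ -(max 0 (M - mneg)) ≤ ft a := by
    intro a _ haM
    rcases le_total a mneg with h | h
    · have := hfneg a h; constructor <;> omega
    · have := flip mneg a h
      have := hfneg mneg le_rfl
      constructor <;> omega
  have hgbound : ∀ a : ℤ, m < a → a < M → g a ≤ max 0 M ∧ -(max 0 M) ≤ g a := by
    intro a ham haM
    rcases le_total a 0 with h | h
    · have := hgneg a h; constructor <;> omega
    · have := glip 0 a h
      have := hgneg 0 le_rfl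
      constructor <;> omega
  have hbound : ∀ a : ℤ, g a - ft a ≤ B ∧ ft a - g a ≤ B := by
    intro a
    rcases le_or_gt a m with h | h
    · have h1 := hfneg a (le_trans h (min_le_left _ _))
      have h2 := hgneg a (le_trans h (min_le_right _ _))
      omega
    · rcases le_or_gt M a with h' | h'
      · have h1 := hfpos a (le_trans (le_max_left _ _) h')
        have h2 := hgpos a (le_trans (le_max_right _ _) h')
        omega
      · have h1 := hfbound a h h'
        have h2 := hgbound a h h'
        omega
  -- the homotopy
  refine ⟨0, 5 * n, fun p => max (min (g p.1) (ft p.1 + max p.2 0)) (ft p.1 - max p.2 0),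
    ?_, ⟨m, ?_⟩, ⟨M, ?_⟩, ⟨m, ?_⟩, ⟨M, ?_⟩, ⟨0, ?_⟩, ⟨B, ?_⟩⟩
  · -- graph hom
    rintro ⟨a, j⟩ ⟨b, k⟩ ⟨hne, hor⟩
    have goalOf : ∀ X Y : ℤ, X - Y ≤ 1 → Y - X ≤ 1 →
        (X = Y ∨ pathGraphZ.Adj X Y) := by
      intro X Y h1 h2
      rcases eq_or_ne X Y with h | h
      · exact Or.inl h
      · exact Or.inr ⟨h, by omega⟩
    rcases hor with ⟨hab, hjk⟩ | ⟨hjk, hab⟩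
    · -- same first coordinate, adjacent second
      obtain ⟨hne2, hjk2⟩ := hjk
      simp only at hab hjk2 ⊢
      rw [hab]
      have ht1 : max j 0 - max k 0 ≤ 1 := by omega
      have ht2 : max k 0 - max j 0 ≤ 1 := by omega
      exact goalOf _ _
        (key_lip _ _ _ _ _ _ (by omega) (by omega) (by omega) (by omega) (by omega) (by omega)).1
        (key_lip _ _ _ _ _ _ (by omega) (by omega) (by omega) (by omega) (by omega) (by omega)).2
    · -- same second coordinate, adjacent first
      obtain ⟨hne2, hab2⟩ := hab
      simp only at hjk hab2 ⊢
      rw [hjk]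
      have hfd : ft a - ft b ≤ 1 ∧ ft b - ft a ≤ 1 := by
        rcases hab2 with h | h <;> subst h
        · have := fstep a; constructor <;> omega
        · have := fstep b; constructor <;> omega
      have hgd : g a - g b ≤ 1 ∧ g b - g a ≤ 1 := by
        rcases hab2 with h | h <;> subst h
        · have := gstep a; constructor <;> omega
        · have := gstep b; constructor <;> omega
      exact goalOf _ _
        (key_lip _ _ _ _ _ _ hgd.1 hgd.2 (by omega) (by omega) (by omega) (by omega)).1
        (key_lip _ _ _ _ _ _ hgd.1 hgd.2 (by omega) (by omega) (by omega) (by omega)).2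
  · -- both end at vneg = 0 for i ≤ m
    intro i hi
    exact ⟨hfneg i (le_trans hi (min_le_left _ _)), hgneg i (le_trans hi (min_le_right _ _))⟩
  · -- both end at vpos = 5n for i ≥ M
    intro i hi
    exact ⟨hfpos i (le_trans (le_max_left _ _) hi), hgpos i (le_trans (le_max_right _ _) hi)⟩
  · -- H (a, j) = 0 for a ≤ m
    intro a ha j
    simp only
    have h1 := hfneg a (le_trans ha (min_le_left _ _))
    have h2 := hgneg a (le_trans ha (min_le_right _ _))
    omega
  · -- H (a, j) = 5n for a ≥ M
    intro a ha j
    simp only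
    have h1 := hfpos a (le_trans (le_max_left _ _) ha)
    have h2 := hgpos a (le_trans (le_max_right _ _) ha)
    omega
  · -- H (a, j) = ft a for j ≤ 0
    intro j hj a
    simp only
    omega
  · -- H (a, j) = g a for j ≥ B
    intro j hj a
    simp only
    have := hbound a
    omega
end

section
/- For all integers n and m, the concatenation γₙ·γₘ of the standard winding loops in C₅ is A-homotopic to γₙ₊ₘ. -/
section GammaConcatAux

lemma gammaLift_neg (k i : ℤ) (h : i ≤ 0) : gammaLift k i = 0 := by
  unfold gammaLift; rw [if_pos h]

lemma gammaLift_pos (k i : ℤ) (h : 5 * |k| ≤ i) : gammaLift k i = 5 * k := by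
  have h1 := abs_choice k; have h2 := abs_nonneg k
  unfold gammaLift; split_ifs <;> omega

lemma gammaLift_bound (k a : ℤ) :
    -(5*|k|) ≤ gammaLift k a ∧ gammaLift k a ≤ 5*|k| := by
  have h1 := abs_choice k; have h2 := abs_nonneg k
  unfold gammaLift; split_ifs <;> omega

lemma gammaLift_step (k a : ℤ) :
    -1 ≤ gammaLift k (a+1) - gammaLift k a ∧ gammaLift k (a+1) - gammaLift k a ≤ 1 := by
  have h1 := abs_choice k; have h2 := abs_nonneg k
  unfold gammaLift; split_ifs <;> omega

/-- The lift of the concatenation `γₙ · γₘ` to `I_∞`. -/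
def Lf (n m : ℤ) : ℤ → ℤ := fun a =>
  if 0 ≤ a then gammaLift n a + 5 * m else gammaLift m (a + 5 * |m|)

lemma Lf_step (n m a : ℤ) :
    -1 ≤ Lf n m (a+1) - Lf n m a ∧ Lf n m (a+1) - Lf n m a ≤ 1 := by
  have h1 := abs_choice n; have h2 := abs_nonneg n
  have h3 := abs_choice m; have h4 := abs_nonneg m
  unfold Lf gammaLift; split_ifs <;> omega

lemma Lf_neg (n m a : ℤ) (h : a ≤ -(5*|m|) - 1) : Lf n m a = 0 := by
  have h4 := abs_nonneg m
  unfold Lf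
  rw [if_neg (by omega), gammaLift_neg _ _ (by omega)]

lemma Lf_pos (n m a : ℤ) (h : 5*|n| ≤ a) : Lf n m a = 5*n + 5*m := by
  have h2 := abs_nonneg n
  unfold Lf
  rw [if_pos (by omega), gammaLift_pos _ _ h]

lemma Lf_bound (n m a : ℤ) :
    -(5*|n| + 5*|m|) ≤ Lf n m a ∧ Lf n m a ≤ 5*|n| + 5*|m| := by
  have h1 := gammaLift_bound n a
  have h2 := gammaLift_bound m (a + 5*|m|)
  have h3 := abs_choice m; have h4 := abs_nonneg m; have h5 := abs_nonneg n
  unfold Lf; split_ifs <;> omega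

/-- The lifted homotopy: clamp the target lift near the source lift. -/
def Kf (n m : ℤ) : ℤ × ℤ → ℤ := fun p =>
  max (min (gammaLift (n+m) p.1) (Lf n m p.1 + max p.2 0)) (Lf n m p.1 - max p.2 0)

lemma Kf_stepA (n m a j : ℤ) :
    -1 ≤ Kf n m (a+1, j) - Kf n m (a, j) ∧ Kf n m (a+1, j) - Kf n m (a, j) ≤ 1 := by
  have h1 := Lf_step n m a; have h2 := gammaLift_step (n+m) a
  unfold Kf; simp only; omega

lemma Kf_stepJ (n m a j : ℤ) :
    -1 ≤ Kf n m (a, j+1) - Kf n m (a, j) ∧ Kf n m (a, j+1) - Kf n m (a, j) ≤ 1 := by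
  unfold Kf; simp only; omega

lemma Kf_eq_Lf (n m a j : ℤ) (h : j ≤ 0) : Kf n m (a, j) = Lf n m a := by
  unfold Kf; simp only; omega

lemma Kf_eq_g (n m a j : ℤ) (h : 5*|n| + 5*|m| + 5*|n+m| ≤ j) :
    Kf n m (a, j) = gammaLift (n+m) a := by
  have h1 := Lf_bound n m a
  have h2 := gammaLift_bound (n+m) a
  unfold Kf; simp only; omega

lemma Kf_left (n m a j : ℤ) (h : a ≤ -(5*|m|) - 1) : Kf n m (a, j) = 0 := by
  have h4 := abs_nonneg m
  unfold Kf; simp only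
  rw [Lf_neg n m a h, gammaLift_neg _ _ (by omega)]
  omega

lemma Kf_right (n m a j : ℤ) (h : 5*|n| + 5*|n+m| ≤ a) : Kf n m (a, j) = 5*(n+m) := by
  have h2 := abs_nonneg n; have h6 := abs_nonneg (n+m)
  unfold Kf; simp only
  rw [Lf_pos n m a (by omega), gammaLift_pos _ _ (by omega)]
  omega

lemma p5_zero : p5 0 = 0 := by simp [p5]

lemma p5_five (k : ℤ) : p5 (5 * k) = 0 := by
  unfold p5; push_cast
  rw [show ((5:ZMod 5)) = 0 by decide, zero_mul]

lemma p5_step (x y : ℤ) (h : x = y ∨ y = x + 1 ∨ x = y + 1) :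
    p5 x = p5 y ∨ C5.Adj (p5 x) (p5 y) := by
  have key : ∀ z : ℤ, C5.Adj (p5 z) (p5 (z+1)) := by
    intro z
    refine ⟨?_, Or.inr ?_⟩
    · intro hc
      have hz : (0:ZMod 5) = 1 := by
        have : (z : ZMod 5) = z + 1 := by unfold p5 at hc; push_cast at hc; exact hc
        linear_combination this
      exact absurd hz (by decide)
    · unfold p5; push_cast; ring
  rcases h with h | h | h
  · exact Or.inl (by rw [h])
  · subst h; exact Or.inr (key x)
  · subst h; exact Or.inr (C5.adj_symm (key y))

lemma p5_gammaLift (k i : ℤ) : p5 (gammaLift k i) = gammaC5 k i := by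
  unfold gammaLift gammaC5
  rcases le_or_gt 0 k with hk | hk
  · rw [abs_of_nonneg hk, if_pos hk]
    split_ifs with h1 h2
    · exact p5_zero
    · rfl
    · exact p5_five k
  · rw [abs_of_neg hk, if_neg (not_le.mpr hk)]
    have h5 : 5 * -k = -(5*k) := by ring
    simp only [h5, if_neg (not_le.mpr hk)]
    split_ifs with h1 h2
    · exact p5_zero
    · rfl
    · exact p5_five k

lemma p5_add_five (x k : ℤ) : p5 (x + 5 * k) = p5 x := by
  unfold p5; push_cast
  rw [show ((5:ZMod 5)) = 0 by decide]; ring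

lemma concat_eq (n m a : ℤ) :
    concatZ (gammaC5 n) (gammaC5 m) 0 (5 * |m|) a = p5 (Lf n m a) := by
  unfold concatZ Lf
  split_ifs with h
  · rw [add_zero, p5_add_five, p5_gammaLift]
  · rw [p5_gammaLift]

end GammaConcatAux

/-- For all integers `n`, `m`, the concatenation `γₙ · γₘ` is A-homotopic to
`γₙ₊ₘ` (here `m₀(γₙ,-1) = 0` and `m₀(γₘ,+1) = 5|m|`). -/
theorem gamma_concat (n m : ℤ) :
    AHomotopicZ C5 (concatZ (gammaC5 n) (gammaC5 m) 0 (5 * |m|))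
      (gammaC5 (n + m)) := by
  have h2 := abs_nonneg n; have h4 := abs_nonneg m; have h6 := abs_nonneg (n+m)
  refine ⟨0, 0, fun p => p5 (Kf n m p), ?_, ?_, ?_, ?_, ?_, ?_, ?_⟩
  · rintro ⟨a, j⟩ ⟨b, k⟩ ⟨hne, hadj⟩
    have key : Kf n m (a, j) = Kf n m (b, k) ∨ Kf n m (b, k) = Kf n m (a, j) + 1 ∨
        Kf n m (a, j) = Kf n m (b, k) + 1 := by
      obtain ⟨hab, _, hjk⟩ | ⟨hjk, _, hab⟩ := hadj
      · dsimp only at hab hjk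
        subst hab
        rcases hjk with h | h
        · subst h; have := Kf_stepJ n m a j; omega
        · subst h; have := Kf_stepJ n m a k; omega
      · dsimp only at hab hjk
        subst hjk
        rcases hab with h | h
        · subst h; have := Kf_stepA n m a j; omega
        · subst h; have := Kf_stepA n m b j; omega
    exact p5_step _ _ key
  · refine ⟨-(5*|m|) - 1, fun i hi => ⟨?_, ?_⟩⟩
    · rw [concat_eq, Lf_neg n m i hi, p5_zero]
    · rw [← p5_gammaLift, gammaLift_neg _ _ (by omega), p5_zero]
  · refine ⟨5*|n| + 5*|n+m|, fun i hi => ⟨?_, ?_⟩⟩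
    · rw [concat_eq, Lf_pos n m i (by omega), show 5*n + 5*m = 5*(n+m) by ring, p5_five]
    · rw [← p5_gammaLift, gammaLift_pos _ _ (by omega), p5_five]
  · refine ⟨-(5*|m|) - 1, fun a ha j => ?_⟩
    show p5 (Kf n m (a, j)) = 0
    rw [Kf_left n m a j ha, p5_zero]
  · refine ⟨5*|n| + 5*|n+m|, fun a ha j => ?_⟩
    show p5 (Kf n m (a, j)) = 0
    rw [Kf_right n m a j ha, p5_five]
  · refine ⟨0, fun j hj a => ?_⟩
    show p5 (Kf n m (a, j)) = _
    rw [Kf_eq_Lf n m a j hj, ← concat_eq]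
  · refine ⟨5*|n| + 5*|m| + 5*|n+m|, fun j hj a => ?_⟩
    show p5 (Kf n m (a, j)) = _
    rw [Kf_eq_g n m a j hj, p5_gammaLift]
end
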